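/- Let X be a finite set of observations with |X| ≥ 3 and x, y, z ∈ X. Let B_{xyz} = B_{xy} ∪ B_{yz} ∪ B_{xz}, p = |B_{xz}|, q = |B_{xyz} \ B_{xz}|, O_{xy} = |B_{xy}|, O_{yz} = |B_{yz}|, O_{xz} = |B_{xz}|. Then (p + q) · O_{xz} · D_{xz} ≤ p · ( O_{xy} · D_{xy} + O_{yz} · D_{yz} ), and consequently D_{xz} ≤ ( p · max(O_{xy}, O_{yz}) / ((p + q) · O_{xz}) ) · ( D_{xy} + D_{yz} ), where the prefactor is at most 1 since p = O_{xz} and max(O_{xy}, O_{yz}) ≤ p + q = |B_{xyz}|. -/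

import Mathlib

open Finset
open scoped Classical

/-- The set of times at which observation `x` lies within the band determined by the
unordered pair `s` of observations: times `t` with `b_ℓ(t) ≤ x t ≤ b_u(t)`. -/
noncomputable def timesInS {T : Type*} [Fintype T] (s : Sym2 (T → ℝ)) (x : T → ℝ) : Finset T :=
  Finset.univ.filter (fun t =>
    Sym2.lift ⟨fun v w => min (v t) (w t), fun v w => min_comm (v t) (w t)⟩ s ≤ x t ∧
    x t ≤ Sym2.lift ⟨fun v w => max (v t) (w t), fun v w => max_comm (v t) (w t)⟩ s)

/-- The set of bands of a dataset `X`: one band for each unordered pair of distinct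
observations in `X`. -/
noncomputable def bands {T : Type*} [Fintype T] (X : Finset (T → ℝ)) : Finset (Sym2 (T → ℝ)) :=
  X.sym2.filter (fun s => ¬ s.IsDiag)

/-- Bandwise (Jaccard) similarity of `x` and `y` with respect to the band `s`. -/
noncomputable def bandSimS {T : Type*} [Fintype T] (s : Sym2 (T → ℝ)) (x y : T → ℝ) : ℝ :=
  if timesInS s x ∪ timesInS s y = ∅ then 1
  else ((timesInS s x ∩ timesInS s y).card : ℝ) / ((timesInS s x ∪ timesInS s y).card : ℝ)

/-- Bandwise (Jaccard) distance of `x` and `y` with respect to the band `s`. -/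
noncomputable def bandDistS {T : Type*} [Fintype T] (s : Sym2 (T → ℝ)) (x y : T → ℝ) : ℝ :=
  1 - bandSimS s x y

/-- `B_{xy}`: the set of bands of `X` containing `x` or `y` at some time. -/
noncomputable def Bxy {T : Type*} [Fintype T] (X : Finset (T → ℝ)) (x y : T → ℝ) :
    Finset (Sym2 (T → ℝ)) :=
  (bands X).filter (fun s => timesInS s x ∪ timesInS s y ≠ ∅)

/-- The band distance `D_{xy}`: the average bandwise distance over all bands in `B_{xy}`. -/
noncomputable def bandD {T : Type*} [Fintype T] (X : Finset (T → ℝ)) (x y : T → ℝ) : ℝ :=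
  (1 / ((Bxy X x y).card : ℝ)) * ∑ s ∈ Bxy X x y, bandDistS s x y

lemma jac_poly (a b c d e f g : ℝ) (ha : 0 ≤ a) (hb : 0 ≤ b) (hc : 0 ≤ c) (hd : 0 ≤ d)
    (he : 0 ≤ e) (hf : 0 ≤ f) (hg : 0 ≤ g) :
    ((a+c+d+e+f+g) - (e+g)) * ((a+b+d+e+f+g) * (b+c+d+e+f+g))
      ≤ (((a+b+d+e+f+g) - (d+g)) * (b+c+d+e+f+g)
          + ((b+c+d+e+f+g) - (f+g)) * (a+b+d+e+f+g)) * (a+c+d+e+f+g) := by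
  have hs : (0:ℝ) ≤ 2*e*g*g + 4*e*f*g + 2*e*f*f + 4*e*e*g + 4*e*e*f + 2*e*e*e + 4*d*e*g + 4*d*e*f + 4*d*e*e + 2*d*d*e + c*f*g + c*f*f + 3*c*e*g + 4*c*e*f + 3*c*e*e + c*d*f + 3*c*d*e + c*c*f + c*c*e + 2*b*g*g + 3*b*f*g + b*f*f + 6*b*e*g + 5*b*e*f + 4*b*e*e + 3*b*d*g + 2*b*d*f + 5*b*d*e + b*d*d + 2*b*c*g + 2*b*c*f + 4*b*c*e + 2*b*c*d + b*c*c + 2*b*b*g + b*b*f + 2*b*b*e + b*b*d + b*b*c + 3*a*e*g + 3*a*e*f + 3*a*e*e + a*d*g + a*d*f + 4*a*d*e + a*d*d + 2*a*c*g + 2*a*c*f + 4*a*c*e + 2*a*c*d + a*c*c + 2*a*b*g + 2*a*b*f + 4*a*b*e + 2*a*b*d + 2*a*b*c + a*b*b + a*a*e + a*a*d + a*a*c + a*a*b := by positivity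
  nlinarith [hs, sq_nonneg (a+b)]

set_option maxHeartbeats 1000000 in
lemma jac_card_tri {α : Type*} [DecidableEq α] (A B C : Finset α)
    (hab : A ∪ B ≠ ∅) (hbc : B ∪ C ≠ ∅) (hac : A ∪ C ≠ ∅) :
    1 - ((A ∩ C).card : ℝ) / ((A ∪ C).card : ℝ)
      ≤ (1 - ((A ∩ B).card : ℝ) / ((A ∪ B).card : ℝ))
        + (1 - ((B ∩ C).card : ℝ) / ((B ∪ C).card : ℝ)) := by
  have hab' : (0:ℝ) < ((A ∪ B).card : ℝ) := by
    exact_mod_cast Finset.card_pos.mpr (Finset.nonempty_iff_ne_empty.mpr hab)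
  have hbc' : (0:ℝ) < ((B ∪ C).card : ℝ) := by
    exact_mod_cast Finset.card_pos.mpr (Finset.nonempty_iff_ne_empty.mpr hbc)
  have hac' : (0:ℝ) < ((A ∪ C).card : ℝ) := by
    exact_mod_cast Finset.card_pos.mpr (Finset.nonempty_iff_ne_empty.mpr hac)
  set a := ((A \ B) \ C).card with hadef
  set b := ((B \ A) \ C).card with hbdef
  set c := ((C \ A) \ B).card with hcdef
  set d := ((A ∩ B) \ C).card with hddef
  set e := ((A ∩ C) \ B).card with hedef
  set f := ((B ∩ C) \ A).card with hfdef
  set g := (A ∩ B ∩ C).card with hgdef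
  have iAB : (A ∩ B).card = d + g := by
    have h := Finset.card_sdiff_add_card_inter (A ∩ B) C
    omega
  have iAC : (A ∩ C).card = e + g := by
    have h := Finset.card_sdiff_add_card_inter (A ∩ C) B
    rw [show (A ∩ C) ∩ B = A ∩ B ∩ C by ext t; simp only [Finset.mem_inter]; tauto] at h
    omega
  have iBC : (B ∩ C).card = f + g := by
    have h := Finset.card_sdiff_add_card_inter (B ∩ C) A
    rw [show (B ∩ C) ∩ A = A ∩ B ∩ C by ext t; simp only [Finset.mem_inter]; tauto] at h
    omega
  have cA : A.card = a + d + e + g := by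
    have h1 := Finset.card_sdiff_add_card_inter A B
    have h2 := Finset.card_sdiff_add_card_inter (A \ B) C
    rw [show (A \ B) ∩ C = (A ∩ C) \ B by
      ext t; simp only [Finset.mem_inter, Finset.mem_sdiff]; tauto] at h2
    omega
  have cB : B.card = b + d + f + g := by
    have h1 := Finset.card_sdiff_add_card_inter B A
    have h2 := Finset.card_sdiff_add_card_inter (B \ A) C
    rw [show (B \ A) ∩ C = (B ∩ C) \ A by
      ext t; simp only [Finset.mem_inter, Finset.mem_sdiff]; tauto] at h2
    rw [show B ∩ A = A ∩ B by rw [Finset.inter_comm]] at h1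
    omega
  have cC : C.card = c + e + f + g := by
    have h1 := Finset.card_sdiff_add_card_inter C A
    have h2 := Finset.card_sdiff_add_card_inter (C \ A) B
    rw [show (C \ A) ∩ B = (B ∩ C) \ A by
      ext t; simp only [Finset.mem_inter, Finset.mem_sdiff]; tauto] at h2
    rw [show C ∩ A = A ∩ C by rw [Finset.inter_comm]] at h1
    omega
  have uAB : (A ∪ B).card = a + b + d + e + f + g := by
    have h := Finset.card_union_add_card_inter A B
    omega
  have uBC : (B ∪ C).card = b + c + d + e + f + g := by
    have h := Finset.card_union_add_card_inter B C
    omega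
  have uAC : (A ∪ C).card = a + c + d + e + f + g := by
    have h := Finset.card_union_add_card_inter A C
    omega
  rw [one_sub_div hac'.ne', one_sub_div hab'.ne', one_sub_div hbc'.ne',
      div_add_div _ _ hab'.ne' hbc'.ne', div_le_div_iff₀ hac' (mul_pos hab' hbc')]
  rw [iAB, iAC, iBC, uAB, uBC, uAC]
  push_cast
  have := jac_poly (a:ℝ) b c d e f g (by positivity) (by positivity) (by positivity)
    (by positivity) (by positivity) (by positivity) (by positivity)
  linarith [this]

lemma bandDistS_nonneg {T : Type*} [Fintype T] (s : Sym2 (T → ℝ)) (x y : T → ℝ) :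
    0 ≤ bandDistS s x y := by
  unfold bandDistS bandSimS
  split_ifs with h
  · norm_num
  · have hpos : (0:ℝ) < ((timesInS s x ∪ timesInS s y).card : ℝ) := by
      exact_mod_cast Finset.card_pos.mpr (Finset.nonempty_iff_ne_empty.mpr h)
    have hle : ((timesInS s x ∩ timesInS s y).card : ℝ)
        ≤ ((timesInS s x ∪ timesInS s y).card : ℝ) := by
      exact_mod_cast Finset.card_le_card (Finset.inter_subset_union)
    have := div_le_one_of_le₀ hle hpos.le
    linarith

lemma bandDistS_le_one {T : Type*} [Fintype T] (s : Sym2 (T → ℝ)) (x y : T → ℝ) :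
    bandDistS s x y ≤ 1 := by
  unfold bandDistS bandSimS
  split_ifs with h
  · norm_num
  · have : (0:ℝ) ≤ ((timesInS s x ∩ timesInS s y).card : ℝ)
        / ((timesInS s x ∪ timesInS s y).card : ℝ) := by positivity
    linarith

lemma bandDistS_eq_zero {T : Type*} [Fintype T] (s : Sym2 (T → ℝ)) (x y : T → ℝ)
    (h : timesInS s x ∪ timesInS s y = ∅) : bandDistS s x y = 0 := by
  simp [bandDistS, bandSimS, h]

lemma bandDistS_eq_one_left {T : Type*} [Fintype T] (s : Sym2 (T → ℝ)) (x y : T → ℝ)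
    (h : timesInS s x = ∅) (h2 : timesInS s x ∪ timesInS s y ≠ ∅) : bandDistS s x y = 1 := by
  have hi : timesInS s x ∩ timesInS s y = ∅ := by rw [h]; exact Finset.empty_inter _
  simp [bandDistS, bandSimS, h2, hi]

lemma bandDistS_eq_one_right {T : Type*} [Fintype T] (s : Sym2 (T → ℝ)) (x y : T → ℝ)
    (h : timesInS s y = ∅) (h2 : timesInS s x ∪ timesInS s y ≠ ∅) : bandDistS s x y = 1 := by
  have hi : timesInS s x ∩ timesInS s y = ∅ := by rw [h]; exact Finset.inter_empty _
  simp [bandDistS, bandSimS, h2, hi]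

lemma bandDistS_triangle {T : Type*} [Fintype T] (s : Sym2 (T → ℝ)) (x y z : T → ℝ) :
    bandDistS s x z ≤ bandDistS s x y + bandDistS s y z := by
  by_cases hac : timesInS s x ∪ timesInS s z = ∅
  · rw [bandDistS_eq_zero _ _ _ hac]
    exact add_nonneg (bandDistS_nonneg _ _ _) (bandDistS_nonneg _ _ _)
  by_cases hab : timesInS s x ∪ timesInS s y = ∅
  · obtain ⟨hA, hB⟩ := Finset.union_eq_empty.mp hab
    have hxz : bandDistS s x z = bandDistS s y z := by
      unfold bandDistS bandSimS; rw [hA, hB]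
    have h0 : bandDistS s x y = 0 := bandDistS_eq_zero _ _ _ hab
    rw [hxz, h0]; linarith
  by_cases hbc : timesInS s y ∪ timesInS s z = ∅
  · obtain ⟨hB, hC⟩ := Finset.union_eq_empty.mp hbc
    have hxz : bandDistS s x z = bandDistS s x y := by
      unfold bandDistS bandSimS; rw [hB, hC]
    have h0 : bandDistS s y z = 0 := bandDistS_eq_zero _ _ _ hbc
    rw [hxz, h0]; linarith
  · unfold bandDistS bandSimS
    rw [if_neg hac, if_neg hab, if_neg hbc]
    exact jac_card_tri _ _ _ hab hbc hac

set_option maxHeartbeats 1000000 in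
/-- Quantitative form of the triangle inequality: with `B_{xyz} = B_{xy} ∪ B_{yz} ∪ B_{xz}`,
`p = |B_{xz}|`, `q = |B_{xyz} \ B_{xz}|`, `O_{xy} = |B_{xy}|`, `O_{yz} = |B_{yz}|`,
`O_{xz} = |B_{xz}|`, one has
`(p + q) · O_{xz} · D_{xz} ≤ p · (O_{xy} · D_{xy} + O_{yz} · D_{yz})`, hence
`D_{xz} ≤ (p · max(O_{xy}, O_{yz}) / ((p + q) · O_{xz})) · (D_{xy} + D_{yz})`, where the
prefactor is at most `1` since `p = O_{xz}` and `max(O_{xy}, O_{yz}) ≤ p + q = |B_{xyz}|`. -/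
theorem bandD_triangle_quantitative {T : Type*} [Fintype T] [Nonempty T]
    (X : Finset (T → ℝ)) (hX : 3 ≤ X.card)
    (x y z : T → ℝ) (hx : x ∈ X) (hy : y ∈ X) (hz : z ∈ X) :
    (((Bxy X x z).card : ℝ) + (((Bxy X x y ∪ Bxy X y z ∪ Bxy X x z) \ Bxy X x z).card : ℝ))
        * ((Bxy X x z).card : ℝ) * bandD X x z
      ≤ ((Bxy X x z).card : ℝ) *
          (((Bxy X x y).card : ℝ) * bandD X x y + ((Bxy X y z).card : ℝ) * bandD X y z) ∧
    bandD X x z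
      ≤ (((Bxy X x z).card : ℝ) * max ((Bxy X x y).card : ℝ) ((Bxy X y z).card : ℝ)
            / ((((Bxy X x z).card : ℝ)
                + (((Bxy X x y ∪ Bxy X y z ∪ Bxy X x z) \ Bxy X x z).card : ℝ))
              * ((Bxy X x z).card : ℝ)))
          * (bandD X x y + bandD X y z) ∧
    ((Bxy X x z).card : ℝ) * max ((Bxy X x y).card : ℝ) ((Bxy X y z).card : ℝ)
        / ((((Bxy X x z).card : ℝ)
            + (((Bxy X x y ∪ Bxy X y z ∪ Bxy X x z) \ Bxy X x z).card : ℝ))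
          * ((Bxy X x z).card : ℝ))
      ≤ 1 := by
  classical
  set A := Bxy X x y with hA
  set B := Bxy X y z with hB
  set C := Bxy X x z with hC
  set U := A ∪ B ∪ C with hU
  set p : ℝ := (C.card : ℝ) with hp
  set q : ℝ := ((U \ C).card : ℝ) with hq
  set M : ℝ := max ((A.card : ℝ)) ((B.card : ℝ)) with hM
  have hCU : C ⊆ U := Finset.subset_union_right
  have hAU : A ⊆ U := Finset.subset_union_left.trans Finset.subset_union_left
  have hBU : B ⊆ U := Finset.subset_union_right.trans Finset.subset_union_left
  have memBands : ∀ s ∈ U, s ∈ bands X := by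
    intro s hs
    rw [hU] at hs
    rcases Finset.mem_union.mp hs with hs' | hs'
    · rcases Finset.mem_union.mp hs' with hs'' | hs''
      · exact (Finset.mem_filter.mp (hA ▸ hs'')).1
      · exact (Finset.mem_filter.mp (hB ▸ hs'')).1
    · exact (Finset.mem_filter.mp (hC ▸ hs')).1
  set Sxy := ∑ s ∈ A, bandDistS s x y with hSxy
  set Syz := ∑ s ∈ B, bandDistS s y z with hSyz
  set Sxz := ∑ s ∈ C, bandDistS s x z with hSxz
  have key : ∀ (W : Finset (Sym2 (T → ℝ))) (f : Sym2 (T → ℝ) → ℝ),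
      (W.card : ℝ) * ((1 / (W.card : ℝ)) * ∑ s ∈ W, f s) = ∑ s ∈ W, f s := by
    intro W f
    rcases eq_or_ne W.card 0 with h | h
    · rw [Finset.card_eq_zero.mp h]; simp
    · have : ((W.card : ℝ)) ≠ 0 := Nat.cast_ne_zero.mpr h
      field_simp
  have hDxz : p * bandD X x z = Sxz := by
    rw [hSxz, hp]; unfold bandD; rw [← hC]; exact key C _
  have hDxy : (A.card : ℝ) * bandD X x y = Sxy := by
    rw [hSxy]; unfold bandD; rw [← hA]; exact key A _
  have hDyz : (B.card : ℝ) * bandD X y z = Syz := by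
    rw [hSyz]; unfold bandD; rw [← hB]; exact key B _
  have hp0 : (0:ℝ) ≤ p := Nat.cast_nonneg _
  have hq0 : (0:ℝ) ≤ q := Nat.cast_nonneg _
  have hSxyU : Sxy = ∑ s ∈ U, bandDistS s x y := by
    rw [hSxy]
    refine Finset.sum_subset hAU (fun s hsU hsA => bandDistS_eq_zero _ _ _ ?_)
    by_contra hne'
    exact hsA (by rw [hA]; exact Finset.mem_filter.mpr ⟨memBands s hsU, hne'⟩)
  have hSyzU : Syz = ∑ s ∈ U, bandDistS s y z := by
    rw [hSyz]
    refine Finset.sum_subset hBU (fun s hsU hsB => bandDistS_eq_zero _ _ _ ?_)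
    by_contra hne'
    exact hsB (by rw [hB]; exact Finset.mem_filter.mpr ⟨memBands s hsU, hne'⟩)
  have h1 : Sxz ≤ ∑ s ∈ C, (bandDistS s x y + bandDistS s y z) :=
    Finset.sum_le_sum (fun s _ => bandDistS_triangle s x y z)
  have h2 : q ≤ ∑ s ∈ U \ C, (bandDistS s x y + bandDistS s y z) := by
    have hone : ∀ s ∈ U \ C, (1:ℝ) ≤ bandDistS s x y + bandDistS s y z := by
      intro s hs
      obtain ⟨hsU, hsC⟩ := Finset.mem_sdiff.mp hs
      have hband := memBands s hsU
      have hxzempty : timesInS s x ∪ timesInS s z = ∅ := by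
        by_contra hne'
        exact hsC (by rw [hC]; exact Finset.mem_filter.mpr ⟨hband, hne'⟩)
      obtain ⟨hx0, hz0⟩ := Finset.union_eq_empty.mp hxzempty
      rw [hU] at hsU
      rcases Finset.mem_union.mp hsU with hs' | hs'
      · rcases Finset.mem_union.mp hs' with hs'' | hs''
        · have hmem : s ∈ Bxy X x y := hA ▸ hs''
          have hne2 : timesInS s x ∪ timesInS s y ≠ ∅ := (Finset.mem_filter.mp hmem).2
          have := bandDistS_eq_one_left s x y hx0 hne2
          linarith [bandDistS_nonneg s y z]
        · have hmem : s ∈ Bxy X y z := hB ▸ hs''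
          have hne2 : timesInS s y ∪ timesInS s z ≠ ∅ := (Finset.mem_filter.mp hmem).2
          have := bandDistS_eq_one_right s y z hz0 hne2
          linarith [bandDistS_nonneg s x y]
      · exact absurd hs' hsC
    calc q = ∑ _s ∈ U \ C, (1:ℝ) := by rw [hq]; simp
      _ ≤ _ := Finset.sum_le_sum hone
  have hstar : Sxz + q ≤ Sxy + Syz := by
    have e1 : Sxy + Syz = ∑ s ∈ U \ C, (bandDistS s x y + bandDistS s y z)
        + ∑ s ∈ C, (bandDistS s x y + bandDistS s y z) := by
      rw [hSxyU, hSyzU, ← Finset.sum_add_distrib]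
      exact (Finset.sum_sdiff hCU).symm
    linarith [h1, h2]
  have hSxz_le : Sxz ≤ p := by
    calc Sxz ≤ ∑ _s ∈ C, (1:ℝ) := Finset.sum_le_sum (fun s _ => bandDistS_le_one s x z)
      _ = p := by rw [hp]; simp
  have hDxy_nn : 0 ≤ bandD X x y := by
    unfold bandD
    exact mul_nonneg (by positivity) (Finset.sum_nonneg fun s _ => bandDistS_nonneg s x y)
  have hDyz_nn : 0 ≤ bandD X y z := by
    unfold bandD
    exact mul_nonneg (by positivity) (Finset.sum_nonneg fun s _ => bandDistS_nonneg s y z)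
  have hMle : M ≤ p + q := by
    have hc := Finset.card_sdiff_add_card_eq_card hCU
    have hUc : ((U.card : ℕ) : ℝ) = p + q := by
      rw [hp, hq, ← hc]; push_cast; ring
    rw [← hUc, hM]
    exact max_le (by exact_mod_cast Finset.card_le_card hAU)
      (by exact_mod_cast Finset.card_le_card hBU)
  have hM0 : 0 ≤ M := le_trans (Nat.cast_nonneg _) (le_max_left _ _)
  have G1 : (p + q) * p * bandD X x z
      ≤ p * ((A.card : ℝ) * bandD X x y + (B.card : ℝ) * bandD X y z) := by
    rw [mul_assoc, hDxz, hDxy, hDyz]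
    nlinarith [mul_le_mul_of_nonneg_left hstar hp0,
      mul_nonneg hq0 (sub_nonneg.mpr hSxz_le)]
  refine ⟨G1, ?_, ?_⟩
  · rcases eq_or_ne C.card 0 with h | h
    · have hCempty : C = ∅ := Finset.card_eq_zero.mp h
      have hD0 : bandD X x z = 0 := by
        unfold bandD; rw [← hC, hCempty]; simp
      rw [hD0]
      exact mul_nonneg (div_nonneg (mul_nonneg hp0 hM0) (mul_nonneg (by linarith) hp0))
        (add_nonneg hDxy_nn hDyz_nn)
    · have hppos : (0:ℝ) < p := by
        rw [hp]; exact_mod_cast Nat.pos_of_ne_zero h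
      have hpq : (0:ℝ) < p + q := by linarith
      have hpre : p * M / ((p + q) * p) = M / (p + q) := by
        field_simp
      rw [hpre, div_mul_eq_mul_div, le_div_iff₀ hpq]
      have s1 : Sxy ≤ M * bandD X x y := by
        rw [← hDxy]
        exact mul_le_mul_of_nonneg_right (le_max_left _ _) hDxy_nn
      have s2 : Syz ≤ M * bandD X y z := by
        rw [← hDyz]
        exact mul_le_mul_of_nonneg_right (le_max_right _ _) hDyz_nn
      have hchain : (p + q) * Sxz ≤ p * (M * (bandD X x y + bandD X y z)) := by
        nlinarith [mul_le_mul_of_nonneg_left hstar hp0,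
          mul_nonneg hq0 (sub_nonneg.mpr hSxz_le),
          mul_le_mul_of_nonneg_left (add_le_add s1 s2) hp0]
      have hfin : p * (bandD X x z * (p + q)) ≤ p * (M * (bandD X x y + bandD X y z)) := by
        calc p * (bandD X x z * (p + q)) = (p + q) * (p * bandD X x z) := by ring
          _ = (p + q) * Sxz := by rw [hDxz]
          _ ≤ _ := hchain
      exact le_of_mul_le_mul_left hfin hppos
  · rcases eq_or_ne C.card 0 with h | h
    · have hp' : p = 0 := by rw [hp, h]; simp
      rw [hp']
      norm_num
    · have hppos : (0:ℝ) < p := by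
        rw [hp]; exact_mod_cast Nat.pos_of_ne_zero h
      have hpq : (0:ℝ) < p + q := by linarith
      rw [div_le_one (mul_pos hpq hppos)]
      calc p * M ≤ p * (p + q) := mul_le_mul_of_nonneg_left hMle hp0
        _ = (p + q) * p := mul_comm _ _
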